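/- Let G be a linearly ordered group and S = {x₁ < … < x_k} with k ≥ 4 a finite subset satisfying |S·S| ≤ 3|S| − 4. Set T = {x₁, …, x_{k−1}}. If |T·T| ≥ 3|T| − 3, then x_{k−1}x_k = x_kx_{k−1} and x_{k−2}x_k = x_kx_{k−2} = x_{k−1}². -/

import Mathlib

open Pointwise

theorem stmt11 {G : Type*} [Group G] [LinearOrder G]
    [CovariantClass G G (· * ·) (· ≤ ·)]
    [CovariantClass G G (Function.swap (· * ·)) (· ≤ ·)]
    (k : ℕ) (hk : 4 ≤ k) (x : ℕ → G)
    (hmono : ∀ i j, i < j → j < k → x i < x j)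
    (S : Finset G) (hS : S = (Finset.range k).image x)
    (hScard : (S * S).card ≤ 3 * S.card - 4)
    (T : Finset G) (hT : T = (Finset.range (k - 1)).image x)
    (hTcard : 3 * T.card - 3 ≤ (T * T).card) :
    x (k - 2) * x (k - 1) = x (k - 1) * x (k - 2) ∧
      x (k - 3) * x (k - 1) = x (k - 1) * x (k - 3) ∧
      x (k - 3) * x (k - 1) = x (k - 2) * x (k - 2) := by
  have hmono' : ∀ i j, i ≤ j → j < k → x i ≤ x j := by
    intro i j hij hj
    rcases eq_or_lt_of_le hij with rfl | h
    · exact le_rfl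
    · exact (hmono i j h hj).le
  set y := x (k - 1) with hy
  set c := x (k - 2) with hc
  set b := x (k - 3) with hb
  have hcy : c < y := hmono _ _ (by omega) (by omega)
  have hbc : b < c := hmono _ _ (by omega) (by omega)
  have hinj : ∀ i j, i < k → j < k → x i = x j → i = j := by
    intro i j hi hj hxy
    rcases lt_trichotomy i j with h | h | h
    · exact absurd hxy (ne_of_lt (hmono i j h hj))
    · exact h
    · exact absurd hxy.symm (ne_of_lt (hmono j i h hi))
  have hScard' : S.card = k := by
    rw [hS, Finset.card_image_of_injOn, Finset.card_range]
    intro i hi j hj hxy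
    simp only [Finset.coe_range, Set.mem_Iio] at hi hj
    exact hinj i j hi hj hxy
  have hTcard' : T.card = k - 1 := by
    rw [hT, Finset.card_image_of_injOn, Finset.card_range]
    intro i hi j hj hxy
    simp only [Finset.coe_range, Set.mem_Iio] at hi hj
    exact hinj i j (by omega) (by omega) hxy
  have hTS : T ⊆ S := by
    rw [hS, hT]
    exact Finset.image_subset_image (Finset.range_subset_range.2 (by omega))
  have hTTSS : T * T ⊆ S * S := Finset.mul_subset_mul hTS hTS
  have hmemS : ∀ i, i < k → x i ∈ S := by
    intro i hi; rw [hS]; exact Finset.mem_image_of_mem x (Finset.mem_range.2 hi)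
  have hTle : ∀ a ∈ T, a ≤ c := by
    intro a ha
    rw [hT] at ha
    obtain ⟨i, hi, rfl⟩ := Finset.mem_image.1 ha
    simp only [Finset.mem_range] at hi
    exact hmono' i (k - 2) (by omega) (by omega)
  have htop : ∀ t ∈ T * T, t ≤ c * c := by
    intro t ht
    obtain ⟨a, ha, a', ha', rfl⟩ := Finset.mem_mul.1 ht
    exact mul_le_mul' (hTle a ha) (hTle a' ha')
  have hyS : y ∈ S := hmemS _ (by omega)
  have hcS : c ∈ S := hmemS _ (by omega)
  have hbS : b ∈ S := hmemS _ (by omega)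
  have hcc_cy : c * c < c * y := mul_lt_mul_right hcy c
  have hcc_yc : c * c < y * c := mul_lt_mul_left hcy c
  have hcy_yy : c * y < y * y := mul_lt_mul_left hcy y
  have hyc_yy : y * c < y * y := mul_lt_mul_right hcy y
  have hcardTT_SS : (T * T).card ≤ (S * S).card := Finset.card_le_card hTTSS
  have hsdiff : ((S * S) \ (T * T)).card = (S * S).card - (T * T).card :=
    Finset.card_sdiff_of_subset hTTSS
  have hcomm : c * y = y * c := by
    by_contra hne
    have hsub : ({c * y, y * c, y * y} : Finset G) ⊆ (S * S) \ (T * T) := by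
      intro u hu
      simp only [Finset.mem_insert, Finset.mem_singleton] at hu
      rw [Finset.mem_sdiff]
      rcases hu with rfl | rfl | rfl
      · exact ⟨Finset.mul_mem_mul hcS hyS,
          fun h => absurd (htop _ h) (not_le.2 hcc_cy)⟩
      · exact ⟨Finset.mul_mem_mul hyS hcS,
          fun h => absurd (htop _ h) (not_le.2 hcc_yc)⟩
      · exact ⟨Finset.mul_mem_mul hyS hyS,
          fun h => absurd (htop _ h) (not_le.2 (hcc_cy.trans hcy_yy))⟩
    have hcard3 : ({c * y, y * c, y * y} : Finset G).card = 3 := by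
      rw [Finset.card_insert_of_notMem (by simp [hne, ne_of_lt hcy_yy]),
        Finset.card_insert_of_notMem (by simp [ne_of_lt hyc_yy]),
        Finset.card_singleton]
    have := Finset.card_le_card hsub
    omega
  have hnew : ∀ u, u ∈ S * S → u < c * y → u ∈ T * T := by
    intro u hu hlt
    by_contra hnot
    have hsub : ({u, c * y, y * y} : Finset G) ⊆ (S * S) \ (T * T) := by
      intro v hv
      simp only [Finset.mem_insert, Finset.mem_singleton] at hv
      rw [Finset.mem_sdiff]
      rcases hv with rfl | rfl | rfl
      · exact ⟨hu, hnot⟩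
      · exact ⟨Finset.mul_mem_mul hcS hyS,
          fun h => absurd (htop _ h) (not_le.2 hcc_cy)⟩
      · exact ⟨Finset.mul_mem_mul hyS hyS,
          fun h => absurd (htop _ h) (not_le.2 (hcc_cy.trans hcy_yy))⟩
    have hcard3 : ({u, c * y, y * y} : Finset G).card = 3 := by
      rw [Finset.card_insert_of_notMem
          (by simp [ne_of_lt hlt, ne_of_lt (hlt.trans hcy_yy)]),
        Finset.card_insert_of_notMem (by simp [ne_of_lt hcy_yy]),
        Finset.card_singleton]
    have := Finset.card_le_card hsub
    omega
  have hbyT : b * y ∈ T * T :=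
    hnew _ (Finset.mul_mem_mul hbS hyS) (mul_lt_mul_left hbc y)
  have hybT : y * b ∈ T * T := by
    refine hnew _ (Finset.mul_mem_mul hyS hbS) ?_
    rw [hcomm]
    exact mul_lt_mul_right hbc y
  obtain ⟨p, hp, q, hq, hpq⟩ := Finset.mem_mul.1 hbyT
  obtain ⟨p', hp', q', hq', hpq'⟩ := Finset.mem_mul.1 hybT
  rw [hT] at hp hq hp' hq'
  obtain ⟨i, hi, rfl⟩ := Finset.mem_image.1 hp
  obtain ⟨j, hj, rfl⟩ := Finset.mem_image.1 hq
  obtain ⟨i', hi', rfl⟩ := Finset.mem_image.1 hp'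
  obtain ⟨j', hj', rfl⟩ := Finset.mem_image.1 hq'
  simp only [Finset.mem_range] at hi hj hi' hj'
  have hbc_by : b * c < b * y := mul_lt_mul_right hcy b
  have hcb_yb : c * b < y * b := mul_lt_mul_left hcy b
  have hieq : i = k - 2 := by
    by_contra h
    have h1 : x i ≤ b := hmono' i (k - 3) (by omega) (by omega)
    have h2 : x i * x j ≤ b * c :=
      mul_le_mul' h1 (hmono' j (k - 2) (by omega) (by omega))
    rw [hpq] at h2
    exact absurd h2 (not_le.2 hbc_by)
  have hjeq' : j' = k - 2 := by
    by_contra h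
    have h1 : x j' ≤ b := hmono' j' (k - 3) (by omega) (by omega)
    have h2 : x i' * x j' ≤ c * b :=
      mul_le_mul' (hmono' i' (k - 2) (by omega) (by omega)) h1
    rw [hpq'] at h2
    exact absurd h2 (not_le.2 hcb_yb)
  subst hieq
  subst hjeq'
  -- hpq : c * x j = b * y,  hpq' : x i' * c = y * b
  have hfinal : b * y = c * c ∧ y * b = c * c := by
    by_cases hj2 : j = k - 2
    · subst hj2
      -- hpq : c * c = b * y
      refine ⟨hpq.symm, ?_⟩
      have h1 : (x i' * c) * y = y * (c * c) := by
        rw [hpq', mul_assoc, hpq]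
      have h2 : x i' * (c * y) = c * (c * y) := by
        calc x i' * (c * y) = (x i' * c) * y := (mul_assoc _ _ _).symm
          _ = y * (c * c) := h1
          _ = (y * c) * c := (mul_assoc _ _ _).symm
          _ = (c * y) * c := by rw [hcomm]
          _ = c * (y * c) := mul_assoc _ _ _
          _ = c * (c * y) := by rw [hcomm]
      have h3 : x i' = c := mul_right_cancel h2
      calc y * b = x i' * c := hpq'.symm
        _ = c * c := by rw [h3]
    · have hxjb : x j ≤ b := hmono' j (k - 3) (by omega) (by omega)
      by_cases hi2 : i' = k - 2
      · exfalso
        subst hi2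
        -- hpq' : c * c = y * b
        have h1 : c * (y * x j) = c * (c * y) := by
          calc c * (y * x j) = (c * y) * x j := (mul_assoc _ _ _).symm
            _ = (y * c) * x j := by rw [hcomm]
            _ = y * (c * x j) := mul_assoc _ _ _
            _ = y * (b * y) := by rw [hpq]
            _ = (y * b) * y := (mul_assoc _ _ _).symm
            _ = (c * c) * y := by rw [← hpq']
            _ = c * (c * y) := mul_assoc _ _ _
        have h2 : y * x j = c * y := mul_left_cancel h1
        have h3 : y * x j = y * c := by rw [h2, hcomm]
        have h4 : x j = c := mul_left_cancel h3
        exact absurd h4 (ne_of_lt (lt_of_le_of_lt hxjb hbc))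
      · exfalso
        have hxib : x i' ≤ b := hmono' i' (k - 3) (by omega) (by omega)
        have h1 : b * c < c * b := by
          calc b * c < b * y := hbc_by
            _ = c * x j := hpq.symm
            _ ≤ c * b := mul_le_mul_right hxjb c
        have h2 : c * b < b * c := by
          calc c * b < y * b := hcb_yb
            _ = x i' * c := hpq'.symm
            _ ≤ b * c := mul_le_mul_left hxib c
        exact lt_irrefl _ (h1.trans h2)
  refine ⟨hcomm, ?_, hfinal.1⟩
  rw [hfinal.1, hfinal.2]
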